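/- If D is a ∗-Prüfer domain, then ∗ is an arithmetisch brauchbar (a.b.) star operation: for every nonzero finitely generated fractional ideal F and all nonzero fractional ideals A, B, the inclusion (FA)^∗ ⊆ (FB)^∗ implies A^∗ ⊆ B^∗. -/

import Mathlib

open FractionalIdeal

/-- A star operation on an integral domain `D` with fraction field `K`, acting on
fractional ideals: it fixes `D`, is extensive, monotone, idempotent (all on nonzero
ideals), and commutes with multiplication by nonzero principal fractional ideals. -/
structure StarOp (D : Type*) [CommRing D] [IsDomain D] (K : Type*) [Field K]
    [Algebra D K] [IsFractionRing D K] where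
  star : FractionalIdeal (nonZeroDivisors D) K → FractionalIdeal (nonZeroDivisors D) K
  star_one : star 1 = 1
  le_star : ∀ {A}, A ≠ 0 → A ≤ star A
  star_mono : ∀ {A B}, A ≠ 0 → A ≤ B → star A ≤ star B
  star_idem : ∀ {A}, A ≠ 0 → star (star A) = star A
  star_smul : ∀ {A : FractionalIdeal (nonZeroDivisors D) K} (x : K), x ≠ 0 → A ≠ 0 →
    star (spanSingleton (nonZeroDivisors D) x * A) = spanSingleton (nonZeroDivisors D) x * star A

variable {D K : Type*} [CommRing D] [IsDomain D] [Field K] [Algebra D K] [IsFractionRing D K]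

set_option linter.unusedSectionVars false in
private lemma myFI_exists_ne_zero {A : FractionalIdeal (nonZeroDivisors D) K} (hA : A ≠ 0) :
    ∃ a ∈ A, a ≠ (0 : K) := by
  by_contra h
  push_neg at h
  exact hA (FractionalIdeal.eq_zero_iff.mpr h)

private lemma myFI_mul_ne_zero {A B : FractionalIdeal (nonZeroDivisors D) K}
    (hA : A ≠ 0) (hB : B ≠ 0) : A * B ≠ 0 := by
  obtain ⟨a, ha, ha0⟩ := myFI_exists_ne_zero hA
  obtain ⟨b, hb, hb0⟩ := myFI_exists_ne_zero hB
  intro h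
  exact mul_ne_zero ha0 hb0 (FractionalIdeal.eq_zero_iff.mp h _ (mul_mem_mul ha hb))

private lemma myFI_inv_ne_zero {F : FractionalIdeal (nonZeroDivisors D) K} (hF : F ≠ 0) :
    F⁻¹ ≠ 0 := by
  obtain ⟨a, ha⟩ := F.isFractional
  intro h
  have hmem : algebraMap D K a ∈ F⁻¹ := by
    rw [FractionalIdeal.mem_inv_iff hF]
    intro y hy
    rcases ha.2 y hy with ⟨c, hc⟩
    exact (FractionalIdeal.mem_one_iff _).mpr ⟨c, by rwa [Algebra.smul_def] at hc⟩
  have ha0 : algebraMap D K a ≠ 0 :=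
    IsFractionRing.to_map_ne_zero_of_mem_nonZeroDivisors ha.1
  exact ha0 (FractionalIdeal.eq_zero_iff.mp h _ hmem)

private lemma myStar_ne_zero (s : StarOp D K) {A : FractionalIdeal (nonZeroDivisors D) K}
    (hA : A ≠ 0) : s.star A ≠ 0 := fun h => hA (le_antisymm (h ▸ s.le_star hA) (zero_le _))

/-- Key lemma: `(C ⋆E)^⋆ = (CE)^⋆`. -/
private lemma myStar_mul_star (s : StarOp D K) {C E : FractionalIdeal (nonZeroDivisors D) K}
    (hC : C ≠ 0) (hE : E ≠ 0) : s.star (C * s.star E) = s.star (C * E) := by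
  have hCE : C * E ≠ 0 := myFI_mul_ne_zero hC hE
  have hCsE : C * s.star E ≠ 0 := myFI_mul_ne_zero hC (myStar_ne_zero s hE)
  refine le_antisymm ?_ (s.star_mono hCE (mul_right_mono (a := C) (s.le_star hE)))
  have h1 : C * s.star E ≤ s.star (C * E) := by
    rw [FractionalIdeal.mul_le]
    intro c hc e he
    rcases eq_or_ne c 0 with rfl | hc0
    · simpa using (s.star (C * E)).zero_mem
    · have hspan : spanSingleton (nonZeroDivisors D) c * E ≤ C * E :=
        mul_left_mono (a := E) (spanSingleton_le_iff_mem.mpr hc)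
      have hsne : spanSingleton (nonZeroDivisors D) c * E ≠ 0 :=
        myFI_mul_ne_zero (spanSingleton_ne_zero_iff.mpr hc0) hE
      have : spanSingleton (nonZeroDivisors D) c * s.star E ≤ s.star (C * E) := by
        rw [← s.star_smul c hc0 hE]
        exact s.star_mono hsne hspan
      exact this (mul_mem_mul (mem_spanSingleton_self _ c) he)
  calc s.star (C * s.star E) ≤ s.star (s.star (C * E)) := s.star_mono hCsE h1
    _ = s.star (C * E) := s.star_idem hCE

/-- In a `∗`-Prüfer domain, `∗` is an a.b. star operation: for nonzero finitely
generated `F` and nonzero `A`, `B`, `(FA)^∗ ⊆ (FB)^∗` implies `A^∗ ⊆ B^∗`. -/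
theorem starPrufer_ab (s : StarOp D K)
    (hP : ∀ F : FractionalIdeal (nonZeroDivisors D) K, F ≠ 0 → (F : Submodule D K).FG → s.star (F * F⁻¹) = 1) :
    ∀ (F A B : FractionalIdeal (nonZeroDivisors D) K), F ≠ 0 → (F : Submodule D K).FG → A ≠ 0 → B ≠ 0 →
      s.star (F * A) ≤ s.star (F * B) → s.star A ≤ s.star B := by
  intro F A B hF hFG hA hB h
  have hFinv : F⁻¹ ≠ 0 := myFI_inv_ne_zero hF
  have key : ∀ (C : FractionalIdeal (nonZeroDivisors D) K), C ≠ 0 →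
      s.star (F⁻¹ * s.star (F * C)) = s.star C := by
    intro C hCne
    have hFC : F * C ≠ 0 := myFI_mul_ne_zero hF hCne
    rw [myStar_mul_star s hFinv hFC, ← mul_assoc, mul_comm F⁻¹ F, mul_comm (F * F⁻¹) C,
      ← myStar_mul_star s hCne (myFI_mul_ne_zero hF hFinv), hP F hF hFG, mul_one]
  calc s.star A = s.star (F⁻¹ * s.star (F * A)) := (key A hA).symm
    _ ≤ s.star (F⁻¹ * s.star (F * B)) := by
        apply s.star_mono (myFI_mul_ne_zero hFinv (myStar_ne_zero s (myFI_mul_ne_zero hF hA)))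
        exact mul_right_mono (a := F⁻¹) h
    _ = s.star B := key B hB
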